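/- Let K be a field and let p, q, a, b, c, d, p', q', a', b', c', d' ∈ K. The algebras S(p,q,a,b,c,d) and S(p',q',a',b',c',d') are isomorphic if and only if there exist x, y, z, w ∈ K with xw − yz ≠ 0 satisfying the eight equations: p'y² + (a'+c')xy = z; x² + q'y² + (b'+d')xy = w; p'w² + (a'+c')zw = px + qz; z² + q'w² + (b'+d')zw = py + qw; p'yw + a'xw + c'yz = ax + bz; xz + q'yw + b'xw + d'yz = ay + bw; p'yw + a'yz + c'xw = cx + dz; xz + q'yw + b'yz + d'xw = cy + dw. -/

import Mathlib

/-- Multiplication of the 2-dimensional algebra `S(p,q,a,b,c,d)` on `K × K`,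
with basis `e = (1,0)`, `f = (0,1)` and table
`e*e = f`, `f*f = p•e + q•f`, `e*f = a•e + b•f`, `f*e = c•e + d•f`. -/
def mulS {K : Type*} [Field K] (p q a b c d : K) (u v : K × K) : K × K :=
  (u.1 * v.2 * a + u.2 * v.1 * c + u.2 * v.2 * p,
   u.1 * v.1 + u.1 * v.2 * b + u.2 * v.1 * d + u.2 * v.2 * q)

/-- `S(p,q,a,b,c,d)` is endo-commutative: `(x*x)*(y*y) = (x*y)*(x*y)`. -/
def EndoComm {K : Type*} [Field K] (p q a b c d : K) : Prop :=
  ∀ u v : K × K,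
    mulS p q a b c d (mulS p q a b c d u u) (mulS p q a b c d v v) =
      mulS p q a b c d (mulS p q a b c d u v) (mulS p q a b c d u v)

/-- `S(p,q,a,b,c,d)` and `S(p',q',a',b',c',d')` are isomorphic: there is a bijective
`K`-linear map between them preserving multiplication. -/
def IsoS {K : Type*} [Field K] (p q a b c d p' q' a' b' c' d' : K) : Prop :=
  ∃ φ : (K × K) ≃ₗ[K] (K × K),
    ∀ u v : K × K,
      φ (mulS p q a b c d u v) = mulS p' q' a' b' c' d' (φ u) (φ v)

theorem isoS_iff {K : Type*} [Field K] (p q a b c d p' q' a' b' c' d' : K) :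
    IsoS p q a b c d p' q' a' b' c' d' ↔
      ∃ x y z w : K, x * w - y * z ≠ 0 ∧
        p' * y ^ 2 + (a' + c') * (x * y) = z ∧
        x ^ 2 + q' * y ^ 2 + (b' + d') * (x * y) = w ∧
        p' * w ^ 2 + (a' + c') * (z * w) = p * x + q * z ∧
        z ^ 2 + q' * w ^ 2 + (b' + d') * (z * w) = p * y + q * w ∧
        p' * (y * w) + a' * (x * w) + c' * (y * z) = a * x + b * z ∧
        x * z + q' * (y * w) + b' * (x * w) + d' * (y * z) = a * y + b * w ∧
        p' * (y * w) + a' * (y * z) + c' * (x * w) = c * x + d * z ∧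
        x * z + q' * (y * w) + b' * (y * z) + d' * (x * w) = c * y + d * w := by
  constructor
  · rintro ⟨φ, hφ⟩
    set x := (φ (1,0)).1 with hx
    set y := (φ (1,0)).2 with hy
    set z := (φ (0,1)).1 with hz
    set w := (φ (0,1)).2 with hw
    have hrep : ∀ u : K × K, φ u = (u.1 * x + u.2 * z, u.1 * y + u.2 * w) := by
      intro u
      have h : u = u.1 • ((1:K),(0:K)) + u.2 • ((0:K),(1:K)) := by ext <;> simp
      conv_lhs => rw [h, map_add, map_smul, map_smul]
      ext <;> simp [hx, hy, hz, hw, mul_comm]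
    have hdet : x * w - y * z ≠ 0 := by
      have h1 : φ (φ.symm (1,0)) = (1,0) := φ.apply_symm_apply _
      have h2 : φ (φ.symm (0,1)) = (0,1) := φ.apply_symm_apply _
      rw [hrep] at h1 h2
      rw [Prod.ext_iff] at h1 h2
      obtain ⟨e1, e2⟩ := h1
      obtain ⟨e3, e4⟩ := h2
      intro hd
      have : (x * w - y * z) * ((φ.symm (1,0)).1 * (φ.symm (0,1)).2
          - (φ.symm (1,0)).2 * (φ.symm (0,1)).1) = 1 := by
        linear_combination ((φ.symm (0,1)).1 * y + (φ.symm (0,1)).2 * w) * e1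
          - ((φ.symm (0,1)).1 * x + (φ.symm (0,1)).2 * z) * e2 + e4
      rw [hd, zero_mul] at this
      exact zero_ne_one this
    have k1 := hφ (1,0) (1,0)
    have k2 := hφ (0,1) (0,1)
    have k3 := hφ (1,0) (0,1)
    have k4 := hφ (0,1) (1,0)
    simp only [mulS, hrep, Prod.ext_iff] at k1 k2 k3 k4
    obtain ⟨k1a, k1b⟩ := k1
    obtain ⟨k2a, k2b⟩ := k2
    obtain ⟨k3a, k3b⟩ := k3
    obtain ⟨k4a, k4b⟩ := k4
    refine ⟨x, y, z, w, hdet, by linear_combination -k1a, by linear_combination -k1b,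
      by linear_combination -k2a, by linear_combination -k2b,
      by linear_combination -k3a, by linear_combination -k3b,
      by linear_combination -k4a, by linear_combination -k4b⟩
  · rintro ⟨x, y, z, w, hdet, h1, h2, h3, h4, h5, h6, h7, h8⟩
    refine ⟨{
      toFun := fun u => (u.1*x + u.2*z, u.1*y + u.2*w)
      map_add' := by intro u v; ext <;> (simp; ring)
      map_smul' := by intro m u; ext <;> (simp; ring)
      invFun := fun v => ((w*v.1 - z*v.2)/(x*w - y*z), (x*v.2 - y*v.1)/(x*w - y*z))
      left_inv := by intro u; ext <;> (simp only; field_simp [show w * x - z * y ≠ 0 by contrapose! hdet; linear_combination hdet]; ring)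
      right_inv := by intro v; ext <;> (simp only; field_simp [show w * x - z * y ≠ 0 by contrapose! hdet; linear_combination hdet]; ring) }, ?_⟩
    intro u v
    simp only [mulS, LinearEquiv.coe_mk, LinearMap.coe_mk, AddHom.coe_mk, Prod.ext_iff]
    constructor
    · linear_combination -(u.1*v.1) * h1 - (u.2*v.2) * h3 - (u.1*v.2) * h5 - (u.2*v.1) * h7
    · linear_combination -(u.1*v.1) * h2 - (u.2*v.2) * h4 - (u.1*v.2) * h6 - (u.2*v.1) * h8
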